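/- Let f : M' → M be an injective ℤ-linear map of lattices in real inner product spaces that is norm-contractive (‖f(m)‖ ≤ ‖m‖ for all m ∈ M'_ℝ). If M can be generated by elements of norm at most c > 0, then χ(M) - χ(M') ≥ log V(rank M) - log V(rank M') - (rank M - rank M')·log c. -/

import Mathlib

open MeasureTheory Module

/-- The volume of the unit ball in the Euclidean space `ℝ^r`. -/
noncomputable def unitBallVol (r : ℕ) : ℝ :=
  (volume (Metric.ball (0 : EuclideanSpace ℝ (Fin r)) 1)).toReal

section Helpers

open Submodule

variable {F : Type*} [NormedAddCommGroup F] [InnerProductSpace ℝ F] [FiniteDimensional ℝ F]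
  [MeasurableSpace F] [BorelSpace F]

lemma volume_ball_eq_unitBallVol :
    (volume (Metric.ball (0 : F) 1)).toReal = unitBallVol (finrank ℝ F) := by
  classical
  let b := stdOrthonormalBasis ℝ F
  have hmp := b.measurePreserving_repr
  have hpre : ⇑b.repr ⁻¹' (Metric.ball (0 : EuclideanSpace ℝ (Fin (finrank ℝ F))) 1)
      = Metric.ball (0 : F) 1 := by
    ext x
    simp [Metric.mem_ball, dist_eq_norm, b.repr.norm_map]
  have := hmp.measure_preimage
    (s := Metric.ball (0 : EuclideanSpace ℝ (Fin (finrank ℝ F))) 1)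
    measurableSet_ball.nullMeasurableSet
  rw [hpre] at this
  rw [unitBallVol, ← this]

lemma covolume_eq_det_abs {ι : Type*} [Fintype ι] [DecidableEq ι]
    (L : Submodule ℤ F) [DiscreteTopology L] [IsZLattice ℝ L]
    (b : Basis ι ℤ L) (b₀ : OrthonormalBasis ι ℝ F) :
    ZLattice.covolume L = |b₀.toBasis.det ((↑) ∘ b)| := by
  rw [ZLattice.covolume_eq_det_mul_measureReal L volume b b₀.toBasis,
    measureReal_congr (ZSpan.fundamentalDomain_ae_parallelepiped b₀.toBasis volume)]
  rw [show ⇑b₀.toBasis = ⇑b₀ from b₀.coe_toBasis, measureReal_def, b₀.volume_parallelepiped]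
  simp

open InnerProductSpace in
open RealInnerProductSpace in
/-- Hadamard-type inequality for a family whose first `r'` vectors come from a contraction. -/
lemma abs_det_le_of_contraction {E' E : Type*}
    [NormedAddCommGroup E'] [InnerProductSpace ℝ E'] [FiniteDimensional ℝ E']
    [NormedAddCommGroup E] [InnerProductSpace ℝ E] [FiniteDimensional ℝ E]
    {r' r : ℕ} (hE' : finrank ℝ E' = r') (hE : finrank ℝ E = r) (hle : r' ≤ r)
    (f : E' →ₗ[ℝ] E) (hcontr : ∀ x, ‖f x‖ ≤ ‖x‖)
    (v' : Fin r' → E') (v : Fin r → E) (hv : LinearIndependent ℝ v)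
    (hvw : ∀ i : Fin r', v (Fin.castLE hle i) = f (v' i))
    (b₀ : OrthonormalBasis (Fin r) ℝ E) (e' : OrthonormalBasis (Fin r') ℝ E') :
    |b₀.toBasis.det v| ≤ |e'.toBasis.det v'| *
      ∏ i ∈ Finset.univ.filter (fun i : Fin r => r' ≤ (i : ℕ)), ‖v i‖ := by
  classical
  haveI : Fact (finrank ℝ E = r) := ⟨hE⟩
  haveI : WellFoundedLT (Fin r) := inferInstance
  have hdim : finrank ℝ E = Fintype.card (Fin r) := by simpa using hE
  let b : OrthonormalBasis (Fin r) ℝ E := gramSchmidtOrthonormalBasis hdim v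
  let o : Orientation ℝ E (Fin r) := b₀.toBasis.orientation
  have h0 : |b₀.toBasis.det v| = |b.toBasis.det v| := by
    rw [← o.volumeForm_robust' b₀ v, ← o.volumeForm_robust' b v]
  have hdet : b.toBasis.det v = ∏ i, ⟪b i, v i⟫ := gramSchmidtOrthonormalBasis_det hdim v
  -- triangularity
  have htri : ∀ i j : Fin r, j < i → ⟪b i, v j⟫ = 0 := by
    intro i j hij
    have hgs0 : gramSchmidt ℝ v i ≠ 0 := gramSchmidt_ne_zero i hv
    have hgs : gramSchmidtNormed ℝ v i ≠ 0 := by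
      rw [gramSchmidtNormed]
      exact smul_ne_zero (by simpa using hgs0) hgs0
    rw [show b i = gramSchmidtNormed ℝ v i from gramSchmidtOrthonormalBasis_apply hdim hgs,
      gramSchmidtNormed, real_inner_smul_left]
    have hinner : ⟪gramSchmidt ℝ v i, v j⟫ = 0 := by
      have hmem : v j ∈ Submodule.span ℝ (gramSchmidt ℝ v '' Set.Iic j) := by
        rw [span_gramSchmidt_Iic]
        exact Submodule.subset_span ⟨j, Set.mem_Iic.mpr le_rfl, rfl⟩
      have hle2 : Submodule.span ℝ (gramSchmidt ℝ v '' Set.Iic j)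
          ≤ (Submodule.span ℝ {gramSchmidt ℝ v i})ᗮ := by
        rw [Submodule.span_le]
        rintro x ⟨k, hk, rfl⟩
        rw [SetLike.mem_coe, Submodule.mem_orthogonal_singleton_iff_inner_right]
        exact gramSchmidt_orthogonal ℝ v (fun h => absurd hij (by
          rw [← h] at hk
          exact not_lt.mpr (Set.mem_Iic.mp hk)))
      exact Submodule.mem_orthogonal_singleton_iff_inner_right.mp (hle2 hmem)
    rw [hinner, mul_zero]
  -- matrices
  set T : Matrix (Fin r') (Fin r') ℝ :=
    Matrix.of fun i j => ⟪b (Fin.castLE hle i), v (Fin.castLE hle j)⟫ with hTdef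
  have hT_tri : T.BlockTriangular id := by
    intro i j hij
    exact htri _ _ hij
  have hdetT : T.det = ∏ i : Fin r', ⟪b (Fin.castLE hle i), v (Fin.castLE hle i)⟫ :=
    Matrix.det_of_upperTriangular hT_tri
  set A : Matrix (Fin r') (Fin r') ℝ :=
    Matrix.of fun i k => ⟪b (Fin.castLE hle i), f (e' k)⟫ with hAdef
  set B : Matrix (Fin r') (Fin r') ℝ := Matrix.of fun k j => ⟪e' k, v' j⟫ with hBdef
  have hTAB : T = A * B := by
    ext i j
    rw [Matrix.mul_apply]
    simp only [hTdef, hAdef, hBdef, Matrix.of_apply]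
    rw [hvw j]
    conv_lhs => rw [← e'.sum_repr (v' j)]
    rw [map_sum, inner_sum]
    refine Finset.sum_congr rfl fun k _ => ?_
    rw [LinearMap.map_smul, real_inner_smul_right, e'.repr_apply_apply]
    ring
  have hdetB : B.det = e'.toBasis.det v' := by
    rw [Basis.det_apply]
    congr 1
    ext k j
    rw [Basis.toMatrix_apply, OrthonormalBasis.coe_toBasis_repr_apply, e'.repr_apply_apply]
    simp [hBdef]
  have hA1 : |A.det| ≤ 1 := by
    haveI : Fact (finrank ℝ (EuclideanSpace ℝ (Fin r')) = r') := ⟨finrank_euclideanSpace_fin⟩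
    let be := EuclideanSpace.basisFun (Fin r') ℝ
    let oe : Orientation ℝ (EuclideanSpace ℝ (Fin r')) (Fin r') := be.toBasis.orientation
    set col : Fin r' → EuclideanSpace ℝ (Fin r') := fun k => WithLp.toLp 2 (fun i => A i k) with hcol
    have hdetA : be.toBasis.det col = A.det := by
      rw [Basis.det_apply]
      congr 1
    have hb_on : Orthonormal ℝ (fun i : Fin r' => b (Fin.castLE hle i)) :=
      b.orthonormal.comp _ (Fin.castLE_injective hle)
    calc |A.det| = |be.toBasis.det col| := by rw [hdetA]
      _ = |oe.volumeForm col| := (oe.volumeForm_robust' be col).symm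
      _ ≤ ∏ k, ‖col k‖ := oe.abs_volumeForm_apply_le col
      _ ≤ 1 := by
          apply Finset.prod_le_one (fun _ _ => norm_nonneg _)
          intro k _
          have hsum : ∑ i : Fin r', ‖col k i‖ ^ 2 ≤ 1 := by
            have h1 := Orthonormal.sum_inner_products_le (f (e' k)) hb_on
              (s := Finset.univ)
            have h2 : ‖f (e' k)‖ ^ 2 ≤ 1 := by
              have h3 : ‖f (e' k)‖ ≤ 1 := by
                calc ‖f (e' k)‖ ≤ ‖e' k‖ := hcontr _
                  _ = 1 := e'.orthonormal.1 k
              nlinarith [norm_nonneg (f (e' k))]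
            calc ∑ i : Fin r', ‖col k i‖ ^ 2
                = ∑ i : Fin r', ‖⟪b (Fin.castLE hle i), f (e' k)⟫‖ ^ 2 := rfl
              _ ≤ ‖f (e' k)‖ ^ 2 := h1
              _ ≤ 1 := h2
          have : ‖col k‖ = Real.sqrt (∑ i : Fin r', ‖col k i‖ ^ 2) := by
            rw [EuclideanSpace.norm_eq]
          rw [this]
          exact Real.sqrt_le_one.mpr hsum
  -- split the product
  have hsplit : (∏ i, ⟪b i, v i⟫) =
      (∏ i ∈ Finset.univ.filter (fun i : Fin r => ((i : ℕ) < r')), ⟪b i, v i⟫) *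
      ∏ i ∈ Finset.univ.filter (fun i : Fin r => ¬ ((i : ℕ) < r')), ⟪b i, v i⟫ :=
    (Finset.prod_filter_mul_prod_filter_not _ _ _).symm
  have hP1 : (∏ i ∈ Finset.univ.filter (fun i : Fin r => ((i : ℕ) < r')), ⟪b i, v i⟫)
      = T.det := by
    rw [hdetT]
    refine (Finset.prod_bij (fun (i : Fin r') _ => Fin.castLE hle i) ?_ ?_ ?_ ?_).symm
    · intro i _
      simp [Fin.castLE]
    · intro i _ j _ h
      exact Fin.castLE_injective hle h
    · intro i hi
      refine ⟨⟨(i : ℕ), (Finset.mem_filter.mp hi).2⟩, Finset.mem_univ _, ?_⟩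
      ext; simp
    · intro i _
      rfl
  have hP2 : |∏ i ∈ Finset.univ.filter (fun i : Fin r => ¬ ((i : ℕ) < r')), ⟪b i, v i⟫|
      ≤ ∏ i ∈ Finset.univ.filter (fun i : Fin r => r' ≤ (i : ℕ)), ‖v i‖ := by
    have hfe : Finset.univ.filter (fun i : Fin r => ¬ ((i : ℕ) < r'))
        = Finset.univ.filter (fun i : Fin r => r' ≤ (i : ℕ)) := by
      ext i; simp [not_lt]
    rw [hfe, Finset.abs_prod]
    refine Finset.prod_le_prod (fun _ _ => abs_nonneg _) fun i _ => ?_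
    calc |⟪b i, v i⟫| ≤ ‖b i‖ * ‖v i‖ := abs_real_inner_le_norm _ _
      _ = ‖v i‖ := by rw [b.orthonormal.1 i, one_mul]
  calc |b₀.toBasis.det v| = |b.toBasis.det v| := h0
    _ = |T.det| * |∏ i ∈ Finset.univ.filter (fun i : Fin r => ¬ ((i : ℕ) < r')), ⟪b i, v i⟫| := by
        rw [hdet, hsplit, abs_mul, hP1]
    _ ≤ (|A.det| * |B.det|) *
        ∏ i ∈ Finset.univ.filter (fun i : Fin r => r' ≤ (i : ℕ)), ‖v i‖ := by
        rw [hTAB, Matrix.det_mul, abs_mul]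
        exact mul_le_mul_of_nonneg_left hP2 (by positivity)
    _ ≤ (1 * |B.det|) *
        ∏ i ∈ Finset.univ.filter (fun i : Fin r => r' ≤ (i : ℕ)), ‖v i‖ := by
        refine mul_le_mul_of_nonneg_right ?_ (Finset.prod_nonneg fun _ _ => norm_nonneg _)
        exact mul_le_mul_of_nonneg_right hA1 (abs_nonneg _)
    _ = |e'.toBasis.det v'| *
        ∏ i ∈ Finset.univ.filter (fun i : Fin r => r' ≤ (i : ℕ)), ‖v i‖ := by
        rw [one_mul, hdetB]


lemma covolume_le_of_contraction {E' E : Type*}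
    [NormedAddCommGroup E'] [InnerProductSpace ℝ E'] [FiniteDimensional ℝ E']
    [MeasurableSpace E'] [BorelSpace E']
    [NormedAddCommGroup E] [InnerProductSpace ℝ E] [FiniteDimensional ℝ E]
    [MeasurableSpace E] [BorelSpace E]
    (M' : Submodule ℤ E') [DiscreteTopology M'] [IsZLattice ℝ M']
    (M : Submodule ℤ E) [DiscreteTopology M] [IsZLattice ℝ M]
    (f : E' →ₗ[ℝ] E) (hinj : Function.Injective f)
    (hmap : M'.map (f.restrictScalars ℤ) ≤ M)
    (hcontr : ∀ x : E', ‖f x‖ ≤ ‖x‖)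
    (c : ℝ) (hc : 0 < c)
    (s : Set E) (hs_span : Submodule.span ℤ s = M) (hs_norm : ∀ x ∈ s, ‖x‖ ≤ c)
    {r' r : ℕ} (hE' : finrank ℝ E' = r') (hE : finrank ℝ E = r) (hle : r' ≤ r) :
    ZLattice.covolume M ≤ c ^ (r - r') * ZLattice.covolume M' := by
  classical
  -- basis of M'
  have hcard' : Fintype.card (Module.Free.ChooseBasisIndex ℤ M') = r' := by
    rw [← Module.finrank_eq_card_chooseBasisIndex, ZLattice.rank ℝ M', hE']
  let b' : Basis (Fin r') ℤ M' :=
    (Module.Free.chooseBasis ℤ M').reindex (Fintype.equivFinOfCardEq hcard')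
  let bE' : Basis (Fin r') ℝ E' := b'.ofZLatticeBasis ℝ M'
  set v' : Fin r' → E' := ⇑bE' with hv'def
  set w : Fin r' → E := f ∘ v' with hwdef
  have hw_li : LinearIndependent ℝ w :=
    bE'.linearIndependent.map' f (LinearMap.ker_eq_bot.mpr hinj)
  have hw_inj : Function.Injective w := hw_li.injective
  have hw_mem : ∀ i, w i ∈ M := by
    intro i
    refine hmap ⟨b' i, (b' i).2, ?_⟩
    simp [hwdef, hv'def, bE', Basis.ofZLatticeBasis_apply]
  -- extend to a basis using generators
  have hsetli : LinearIndependent ℝ (Subtype.val : Set.range w → E) :=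
    (linearIndepOn_id_range_iff hw_inj).mpr hw_li
  obtain ⟨t, hts, hwt, hsspan, htli⟩ :=
    exists_linearIndepOn_id_extension hsetli Set.subset_union_left (t := Set.range w ∪ s)
  have hspan_t : Submodule.span ℝ t = ⊤ := by
    have h1 : Submodule.span ℝ s ≤ Submodule.span ℝ t := by
      refine Submodule.span_le.mpr fun x hx => hsspan (Or.inr hx)
    have h2 : Submodule.span ℝ s = ⊤ := by
      have := IsZLattice.span_top (K := ℝ) (L := M)
      rw [← hs_span] at this
      rwa [Submodule.span_span_of_tower] at this
    exact top_unique (h2 ▸ h1)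
  have ht_fin : t.Finite := LinearIndependent.setFinite htli
  have := ht_fin.fintype
  -- t is a basis set
  have htli' : LinearIndependent ℝ (fun x : t => (x : E)) := htli
  have htspan : ⊤ ≤ Submodule.span ℝ (Set.range (fun x : t => (x : E))) := by
    rw [Subtype.range_coe]; exact hspan_t.ge
  have htcard : Fintype.card t = r := by
    rw [← hE]
    exact (Module.finrank_eq_card_basis (Basis.mk htli' htspan)).symm
  -- cardinality bookkeeping
  have hwt' : Set.range w ⊆ t := hwt
  have hrange_fin : (Set.range w).Finite := Set.finite_range w
  have := hrange_fin.fintype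
  have hcardw : Fintype.card (Set.range w) = r' := by
    rw [Set.card_range_of_injective hw_inj, Fintype.card_fin]
  have hdiff_fin : (t \ Set.range w).Finite := ht_fin.diff
  have := hdiff_fin.fintype
  have hncard_t : t.ncard = r := by
    rw [← Nat.card_coe_set_eq, Nat.card_eq_fintype_card]; exact htcard
  have hncard_w : (Set.range w).ncard = r' := by
    rw [← Nat.card_coe_set_eq, Nat.card_eq_fintype_card]; exact hcardw
  have hcard_diff : Fintype.card (t \ Set.range w : Set E) = r - r' := by
    rw [← Nat.card_eq_fintype_card, Nat.card_coe_set_eq,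
      Set.ncard_diff hwt' hrange_fin, hncard_t, hncard_w]
  let u : Fin (r - r') ≃ (t \ Set.range w : Set E) :=
    (Fintype.equivFinOfCardEq hcard_diff).symm
  have hrr : r' + (r - r') = r := Nat.add_sub_cancel' hle
  let eqv : Fin r ≃ (Fin r' ⊕ Fin (r - r')) :=
    (finCongr hrr.symm).trans finSumFinEquiv.symm
  set v : Fin r → E := (Sum.elim w (fun j => ((u j : E)))) ∘ eqv with hvdef
  have hvw : ∀ i : Fin r', v (Fin.castLE hle i) = w i := by
    intro i
    have : eqv (Fin.castLE hle i) = Sum.inl i := by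
      simp only [eqv, Equiv.trans_apply]
      have : finCongr hrr.symm (Fin.castLE hle i) = Fin.castAdd (r - r') i := by
        ext; simp
      rw [this, finSumFinEquiv_symm_apply_castAdd]
    simp [hvdef, this]
  have hv_high : ∀ i : Fin r, r' ≤ (i : ℕ) → v i ∈ t \ Set.range w := by
    intro i hi
    rcases h : eqv i with j | j
    · exfalso
      have : i = eqv.symm (Sum.inl j) := by rw [← h]; simp
      have hival : (i : ℕ) = (j : ℕ) := by
        rw [this]
        simp [eqv]
      omega
    · have : v i = (u j : E) := by simp [hvdef, h]
      rw [this]; exact (u j).2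
  have hrange_v : Set.range v = t := by
    have h1 : Set.range (Sum.elim w (fun j => ((u j : E)))) = t := by
      rw [Set.Sum.elim_range]
      have : Set.range (fun j => ((u j : E))) = (t \ Set.range w : Set E) := by
        rw [show (fun j => ((u j : E))) = Subtype.val ∘ u from rfl, Set.range_comp,
          Equiv.range_eq_univ, Set.image_univ, Subtype.range_coe]
      rw [this, Set.union_diff_cancel hwt']
    rw [hvdef, Set.range_comp, Equiv.range_eq_univ, Set.image_univ, h1]
  have hv_inj : Function.Injective v := by
    have helim : Function.Injective (Sum.elim w (fun j => ((u j : E)))) := by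
      intro a b hab
      rcases a with a | a <;> rcases b with b | b
      · simp only [Sum.elim_inl] at hab
        exact congrArg Sum.inl (hw_inj hab)
      · exfalso
        exact (u b).2.2 ⟨a, by simpa using hab⟩
      · exfalso
        exact (u a).2.2 ⟨b, by simpa using hab.symm⟩
      · simp only [Sum.elim_inr] at hab
        exact congrArg Sum.inr (u.injective (Subtype.val_injective hab))
    exact helim.comp eqv.injective
  have hv_li : LinearIndependent ℝ v := by
    refine (linearIndepOn_id_range_iff hv_inj).mp ?_
    rw [hrange_v]; exact htli
  have hv_mem : ∀ i, v i ∈ M := by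
    intro i
    have : v i ∈ t := hrange_v ▸ Set.mem_range_self i
    rcases hts this with h | h
    · obtain ⟨j, hj⟩ := h; rw [← hj]; exact hw_mem j
    · rw [← hs_span]; exact Submodule.subset_span h
  have hv_span : ⊤ ≤ Submodule.span ℝ (Set.range v) := by
    rw [hrange_v]; exact hspan_t.ge
  -- the intermediate lattice N
  have hZli : LinearIndependent ℤ v :=
    hv_li.restrict_scalars (by
      intro x y h
      simpa using h)
  set N : Submodule ℤ E := Submodule.span ℤ (Set.range v) with hNdef
  let bV : Basis (Fin r) ℝ E := Basis.mk hv_li hv_span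
  have hbV : ⇑bV = v := Basis.coe_mk hv_li hv_span
  haveI : DiscreteTopology N := by
    have h1 : DiscreteTopology (span ℤ (Set.range ⇑bV) : Submodule ℤ E) := inferInstance
    rw [hbV] at h1
    exact h1
  haveI : IsZLattice ℝ N := by
    refine ⟨?_⟩
    rw [hNdef, Submodule.span_span_of_tower]
    exact top_unique hv_span
  let bN : Basis (Fin r) ℤ N := Basis.span hZli
  have hbN : ∀ i, ((bN i : E)) = v i := fun i => congrArg Subtype.val (Basis.span_apply hZli i)
  -- orthonormal bases
  let b₀ : OrthonormalBasis (Fin r) ℝ E := (stdOrthonormalBasis ℝ E).reindex (finCongr hE)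
  let e' : OrthonormalBasis (Fin r') ℝ E' := (stdOrthonormalBasis ℝ E').reindex (finCongr hE')
  have hcovN : ZLattice.covolume N = |b₀.toBasis.det v| := by
    rw [covolume_eq_det_abs N bN b₀]
    have : (Subtype.val ∘ ⇑bN : Fin r → E) = v := funext fun i => hbN i
    rw [this]
  have hcovM' : ZLattice.covolume M' = |e'.toBasis.det v'| := by
    rw [covolume_eq_det_abs M' b' e']
    have : (Subtype.val ∘ ⇑b' : Fin r' → E') = v' := by
      funext i
      rw [hv'def]
      exact (Basis.ofZLatticeBasis_apply ℝ M' b' i).symm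
    rw [this]
  -- covol M ≤ covol N
  have hMN : ZLattice.covolume M ≤ ZLattice.covolume N := by
    have hcardM : Fintype.card (Module.Free.ChooseBasisIndex ℤ M) = r := by
      rw [← Module.finrank_eq_card_chooseBasisIndex, ZLattice.rank ℝ M, hE]
    let bM : Basis (Fin r) ℤ M :=
      (Module.Free.chooseBasis ℤ M).reindex (Fintype.equivFinOfCardEq hcardM)
    let bMR : Basis (Fin r) ℝ E := bM.ofZLatticeBasis ℝ M
    let g : E →ₗ[ℝ] E := bMR.constr ℝ v
    have hg : ∀ i, g (bMR i) = v i := fun i => bMR.constr_basis ℝ v i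
    have hdetN : b₀.toBasis.det v = LinearMap.det g * b₀.toBasis.det ⇑bMR := by
      rw [← Basis.det_comp]
      congr 1
      funext i
      exact (hg i).symm
    have hcovM : ZLattice.covolume M = |b₀.toBasis.det ⇑bMR| := by
      have hfun : (Subtype.val ∘ ⇑bM : Fin r → E) = ⇑bMR :=
        funext fun i => (Basis.ofZLatticeBasis_apply ℝ M bM i).symm
      rw [covolume_eq_det_abs M bM b₀, hfun]
    set A : Matrix (Fin r) (Fin r) ℤ :=
      Matrix.of fun i j => bM.repr ⟨v j, hv_mem j⟩ i with hA
    have h1 : (LinearMap.toMatrix bMR bMR) g = A.map (Int.cast : ℤ → ℝ) := by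
      ext i j
      rw [LinearMap.toMatrix_apply, hg j]
      have h2 := Basis.ofZLatticeBasis_repr_apply ℝ M bM ⟨v j, hv_mem j⟩ i
      simpa [hA, Matrix.map_apply] using h2
    have hdetg : LinearMap.det g = ((A.det : ℤ) : ℝ) := by
      rw [← LinearMap.det_toMatrix bMR g, h1]
      rw [show (Int.cast : ℤ → ℝ) = ⇑(Int.castRingHom ℝ) from rfl, RingHom.map_det]
      rfl
    have hdet_ne : b₀.toBasis.det v ≠ 0 := by
      have hne : ZLattice.covolume N ≠ 0 := (ZLattice.covolume_pos N volume).ne'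
      rw [hcovN] at hne
      exact fun h => hne (by rw [h, abs_zero])
    have hA_ne : A.det ≠ 0 := by
      intro h
      rw [hdetN, hdetg, h] at hdet_ne
      simp at hdet_ne
    have h1le : (1:ℝ) ≤ |LinearMap.det g| := by
      rw [hdetg, ← Int.cast_abs]
      exact_mod_cast Int.one_le_abs hA_ne
    calc ZLattice.covolume M = |b₀.toBasis.det ⇑bMR| := hcovM
      _ ≤ |LinearMap.det g| * |b₀.toBasis.det ⇑bMR| :=
          le_mul_of_one_le_left (abs_nonneg _) h1le
      _ = |b₀.toBasis.det v| := by rw [hdetN, abs_mul]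
      _ = ZLattice.covolume N := hcovN.symm
  -- covol N ≤ c^(r-r') covol M'
  have hNM' : ZLattice.covolume N ≤ c ^ (r - r') * ZLattice.covolume M' := by
    rw [hcovN, hcovM']
    calc |b₀.toBasis.det v|
        ≤ |e'.toBasis.det v'| *
          ∏ i ∈ Finset.univ.filter (fun i : Fin r => r' ≤ (i : ℕ)), ‖v i‖ := by
          refine abs_det_le_of_contraction hE' hE hle f hcontr v' v hv_li ?_ b₀ e'
          intro i; rw [hvw i]; rfl
      _ ≤ |e'.toBasis.det v'| * c ^ (r - r') := by
          refine mul_le_mul_of_nonneg_left ?_ (abs_nonneg _)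
          calc ∏ i ∈ Finset.univ.filter (fun i : Fin r => r' ≤ (i : ℕ)), ‖v i‖
              ≤ ∏ _i ∈ Finset.univ.filter (fun i : Fin r => r' ≤ (i : ℕ)), c := by
                refine Finset.prod_le_prod (fun i _ => norm_nonneg _) ?_
                intro i hi
                have := hv_high i (Finset.mem_filter.mp hi).2
                exact hs_norm _ (by
                  have h2 : v i ∈ t := this.1
                  rcases hts h2 with h | h
                  · exact absurd h this.2
                  · exact h)
            _ = c ^ (r - r') := by
                rw [Finset.prod_const]
                congr 1
                have hmap : (Finset.univ.filter (fun i : Fin r => r' ≤ (i : ℕ)))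
                    = Finset.univ.map
                      ⟨fun j : Fin (r - r') => Fin.cast hrr (Fin.natAdd r' j), by
                        intro a b hab
                        rw [Fin.ext_iff] at hab ⊢
                        simpa using hab⟩ := by
                  ext i
                  simp only [Finset.mem_filter, Finset.mem_univ, true_and, Finset.mem_map,
                    Function.Embedding.coeFn_mk, Fin.ext_iff]
                  constructor
                  · intro h
                    exact ⟨⟨(i : ℕ) - r', by omega⟩, by show r' + ((i : ℕ) - r') = (i : ℕ); omega⟩
                  · rintro ⟨j, hj⟩
                    have hj' : r' + (j : ℕ) = (i : ℕ) := hj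
                    omega
                rw [hmap, Finset.card_map, Finset.card_univ, Fintype.card_fin]
      _ = c ^ (r - r') * |e'.toBasis.det v'| := mul_comm _ _
  calc ZLattice.covolume M ≤ ZLattice.covolume N := hMN
    _ ≤ c ^ (r - r') * ZLattice.covolume M' := hNM'

end Helpers

/-- If `f : M' → M` is an injective norm-contractive `ℤ`-linear map of lattices and `M` is
generated by elements of norm at most `c > 0`, then
`χ(M) - χ(M') ≥ log V(rank M) - log V(rank M') - (rank M - rank M')·log c`. -/
theorem chi_sub_chi_ge_of_norm_contractive
    {E' E : Type*}
    [NormedAddCommGroup E'] [InnerProductSpace ℝ E'] [FiniteDimensional ℝ E']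
    [MeasurableSpace E'] [BorelSpace E']
    [NormedAddCommGroup E] [InnerProductSpace ℝ E] [FiniteDimensional ℝ E]
    [MeasurableSpace E] [BorelSpace E]
    (M' : Submodule ℤ E') [DiscreteTopology M'] [IsZLattice ℝ M']
    (M : Submodule ℤ E) [DiscreteTopology M] [IsZLattice ℝ M]
    (f : E' →ₗ[ℝ] E) (hinj : Function.Injective f)
    (hmap : M'.map (f.restrictScalars ℤ) ≤ M)
    (hcontr : ∀ x : E', ‖f x‖ ≤ ‖x‖)
    (c : ℝ) (hc : 0 < c)
    (hgen : ∃ s : Set E, Submodule.span ℤ s = M ∧ ∀ x ∈ s, ‖x‖ ≤ c) :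
    Real.log ((volume (Metric.ball (0 : E) 1)).toReal / ZLattice.covolume M)
      - Real.log ((volume (Metric.ball (0 : E') 1)).toReal / ZLattice.covolume M')
    ≥ Real.log (unitBallVol (finrank ℤ M)) - Real.log (unitBallVol (finrank ℤ M'))
      - ((finrank ℤ M : ℝ) - (finrank ℤ M' : ℝ)) * Real.log c := by
  classical
  have hr' : finrank ℤ M' = finrank ℝ E' := ZLattice.rank ℝ M'
  have hr : finrank ℤ M = finrank ℝ E := ZLattice.rank ℝ M
  set r' := finrank ℝ E' with hr'def
  set r := finrank ℝ E with hrdef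
  have hle : r' ≤ r := LinearMap.finrank_le_finrank_of_injective hinj
  -- the key covolume inequality
  obtain ⟨s, hs_span, hs_norm⟩ := hgen
  have key : ZLattice.covolume M ≤ c ^ (r - r') * ZLattice.covolume M' :=
    covolume_le_of_contraction M' M f hinj hmap hcontr c hc s hs_span hs_norm rfl rfl hle
  -- positivity facts
  have hVE : (0:ℝ) < (volume (Metric.ball (0 : E) 1)).toReal :=
    ENNReal.toReal_pos (Metric.measure_ball_pos volume _ one_pos).ne'
      measure_ball_lt_top.ne
  have hVE' : (0:ℝ) < (volume (Metric.ball (0 : E') 1)).toReal :=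
    ENNReal.toReal_pos (Metric.measure_ball_pos volume _ one_pos).ne'
      measure_ball_lt_top.ne
  have hcM : (0:ℝ) < ZLattice.covolume M := ZLattice.covolume_pos M volume
  have hcM' : (0:ℝ) < ZLattice.covolume M' := ZLattice.covolume_pos M' volume
  -- identify unit ball volumes
  have hUB : unitBallVol (finrank ℤ M) = (volume (Metric.ball (0 : E) 1)).toReal := by
    rw [hr, volume_ball_eq_unitBallVol]
  have hUB' : unitBallVol (finrank ℤ M') = (volume (Metric.ball (0 : E') 1)).toReal := by
    rw [hr', volume_ball_eq_unitBallVol]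
  rw [hUB, hUB', Real.log_div hVE.ne' hcM.ne', Real.log_div hVE'.ne' hcM'.ne', hr, hr']
  have hlog : Real.log (ZLattice.covolume M)
      ≤ ((r : ℝ) - (r' : ℝ)) * Real.log c + Real.log (ZLattice.covolume M') := by
    have h1 : Real.log (ZLattice.covolume M)
        ≤ Real.log (c ^ (r - r') * ZLattice.covolume M') :=
      Real.log_le_log hcM key
    rw [Real.log_mul (by positivity) hcM'.ne', Real.log_pow,
      Nat.cast_sub hle] at h1
    exact h1
  linarith [hlog]
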